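/- If P_0 and P_1 are two probability distributions on the same space, then the total variation distance satisfies ‖P_0 − P_1‖_TV ≤ sqrt(1 − exp(−D_KL(P_0 ‖ P_1))) (Bretagnolle–Huber inequality). -/

import Mathlib

open MeasureTheory Real

private lemma bh_amgm (u v p q : ℝ) (hu : 0 ≤ u) (hv : 0 ≤ v) (hp : 0 ≤ p) (hq : 0 ≤ q) :
    2 * Real.sqrt (p * q) * Real.sqrt (u * v) ≤ q * u + p * v := by
  have h1 : Real.sqrt (q * u) * Real.sqrt (p * v) = Real.sqrt (p * q) * Real.sqrt (u * v) := by
    rw [← Real.sqrt_mul (by positivity), ← Real.sqrt_mul (by positivity)]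
    ring_nf
  nlinarith [sq_nonneg (Real.sqrt (q * u) - Real.sqrt (p * v)),
    Real.sq_sqrt (mul_nonneg hq hu), Real.sq_sqrt (mul_nonneg hp hv)]

/-- Bretagnolle–Huber inequality: the total variation distance between two probability
measures is at most `sqrt(1 - exp(- KL(μ ‖ ν)))`, stated for each measurable set. -/
theorem stmt17 {α : Type*} [MeasurableSpace α] (μ ν : Measure α)
    [IsProbabilityMeasure μ] [IsProbabilityMeasure ν]
    (hμν : μ ≪ ν) (hint : Integrable (llr μ ν) μ)
    (s : Set α) (hs : MeasurableSet s) :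
    |(μ s).toReal - (ν s).toReal|
      ≤ Real.sqrt (1 - Real.exp (-∫ x, llr μ ν x ∂μ)) := by
  set g : α → ℝ := fun x ↦ (μ.rnDeriv ν x).toReal with hg_def
  have hg_meas : Measurable g := (Measure.measurable_rnDeriv μ ν).ennreal_toReal
  have hg_nonneg : ∀ x, 0 ≤ g x := fun x ↦ ENNReal.toReal_nonneg
  have hg_int : Integrable g ν := Measure.integrable_toReal_rnDeriv
  have hg_one : ∫ x, g x ∂ν = 1 := by
    rw [Measure.integral_toReal_rnDeriv hμν]
    simp
  -- min and max with 1
  have hmin_int : Integrable (fun x ↦ min (g x) 1) ν := by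
    refine hg_int.mono ((hg_meas.min measurable_const).aestronglyMeasurable) ?_
    filter_upwards with x
    rw [Real.norm_eq_abs, Real.norm_eq_abs, abs_of_nonneg (le_min (hg_nonneg x) one_pos.le),
      abs_of_nonneg (hg_nonneg x)]
    exact min_le_left _ _
  have hgp1 : Integrable (fun x ↦ g x + 1) ν := hg_int.add (integrable_const 1)
  have hmax_int : Integrable (fun x ↦ max (g x) 1) ν := by
    refine hgp1.mono
      ((hg_meas.max measurable_const).aestronglyMeasurable) ?_
    filter_upwards with x
    rw [Real.norm_eq_abs, Real.norm_eq_abs,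
      abs_of_nonneg (le_max_of_le_right one_pos.le : (0:ℝ) ≤ max (g x) 1),
      abs_of_nonneg (by positivity : (0:ℝ) ≤ g x + 1)]
    exact max_le (le_add_of_nonneg_right one_pos.le) (le_add_of_nonneg_left (hg_nonneg x))
  set a : ℝ := ∫ x, min (g x) 1 ∂ν with ha_def
  have ha_nonneg : 0 ≤ a := by
    exact integral_nonneg fun x ↦ le_min (hg_nonneg x) one_pos.le
  have ha_le_one : a ≤ 1 := by
    calc a ≤ ∫ _x, (1:ℝ) ∂ν := integral_mono hmin_int (integrable_const 1)
            (fun x ↦ min_le_right _ _)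
    _ = 1 := by simp
  have hmax_eq : ∫ x, max (g x) 1 ∂ν = 2 - a := by
    have : (fun x ↦ max (g x) 1) = fun x ↦ (g x + 1) - min (g x) 1 := by
      funext x
      have := max_add_min (g x) 1
      linarith
    rw [this, integral_sub hgp1 hmin_int,
      integral_add hg_int (integrable_const 1), hg_one]
    simp [ha_def]
    ring
  -- a > 0
  have ha_pos : 0 < a := by
    rcases ha_nonneg.lt_or_eq with h | h
    · exact h
    exfalso
    have h0 : (fun x ↦ min (g x) 1) =ᵐ[ν] 0 := by
      rw [← integral_eq_zero_iff_of_nonneg (fun x ↦ le_min (hg_nonneg x) one_pos.le) hmin_int]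
      exact h.symm
    have hg0 : (fun x ↦ g x) =ᵐ[ν] 0 := by
      filter_upwards [h0] with x hx
      simp only [Pi.zero_apply] at hx ⊢
      rcases le_or_gt (g x) 1 with hle | hlt
      · rwa [min_eq_left hle] at hx
      · rw [min_eq_right hlt.le] at hx; norm_num at hx
    have : (1:ℝ) = 0 := by
      rw [← hg_one, integral_congr_ae hg0]
      simp
    norm_num at this
  -- |μ s - ν s| ≤ 1 - a
  have hμs : (μ s).toReal = ∫ x in s, g x ∂ν := (Measure.setIntegral_toReal_rnDeriv hμν s).symm
  have hνs : (ν s).toReal = ∫ x in s, (1:ℝ) ∂ν := by simp; rfl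
  have habs : |(μ s).toReal - (ν s).toReal| ≤ 1 - a := by
    rw [hμs, hνs, ← integral_sub hg_int.integrableOn (integrable_const 1).integrableOn]
    rw [abs_le]
    constructor
    · have h1 : ∫ x in s, (g x - 1) ∂ν ≥ -∫ x, (1 - min (g x) 1) ∂ν := by
        have hle : ∫ x in s, (1 - g x) ∂ν ≤ ∫ x, (1 - min (g x) 1) ∂ν := by
          calc ∫ x in s, (1 - g x) ∂ν ≤ ∫ x in s, (1 - min (g x) 1) ∂ν := by
                refine setIntegral_mono ((integrable_const 1).sub hg_int).integrableOn
                  ((integrable_const 1).sub hmin_int).integrableOn ?_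
                intro x
                simp only
                have := min_le_left (g x) 1
                linarith
          _ ≤ ∫ x, (1 - min (g x) 1) ∂ν := by
                refine setIntegral_le_integral ((integrable_const 1).sub hmin_int) ?_
                filter_upwards with x
                simp only [Pi.zero_apply]
                have := min_le_right (g x) 1
                linarith
        have : ∫ x in s, (1 - g x) ∂ν = -∫ x in s, (g x - 1) ∂ν := by
          rw [← integral_neg]
          congr 1 with x
          ring
        linarith [hle, this ▸ hle]
      have h2 : ∫ x, (1 - min (g x) 1) ∂ν = 1 - a := by
        rw [integral_sub (integrable_const 1) hmin_int]
        simp [ha_def]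
      linarith
    · calc ∫ x in s, (g x - 1) ∂ν ≤ ∫ x in s, (max (g x) 1 - 1) ∂ν := by
            refine setIntegral_mono (hg_int.sub (integrable_const 1)).integrableOn
              (hmax_int.sub (integrable_const 1)).integrableOn ?_
            intro x
            simp only
            have := le_max_left (g x) 1
            linarith
      _ ≤ ∫ x, (max (g x) 1 - 1) ∂ν := by
            refine setIntegral_le_integral (hmax_int.sub (integrable_const 1)) ?_
            filter_upwards with x
            simp only [Pi.zero_apply]
            have := le_max_right (g x) 1
            linarith
      _ = 1 - a := by
            rw [integral_sub hmax_int (integrable_const 1), hmax_eq]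
            simp only [integral_const, measure_univ, ENNReal.toReal_one, probReal_univ, smul_eq_mul, one_mul]
            ring
  -- b = ∫ sqrt g dν
  set b : ℝ := ∫ x, Real.sqrt (g x) ∂ν with hb_def
  have hsqrt_int : Integrable (fun x ↦ Real.sqrt (g x)) ν := by
    refine hgp1.mono
      (hg_meas.sqrt.aestronglyMeasurable) ?_
    filter_upwards with x
    rw [Real.norm_eq_abs, Real.norm_eq_abs, abs_of_nonneg (Real.sqrt_nonneg _),
      abs_of_nonneg (by positivity : (0:ℝ) ≤ g x + 1)]
    nlinarith [Real.sq_sqrt (hg_nonneg x), Real.sqrt_nonneg (g x), sq_nonneg (Real.sqrt (g x) - 1)]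
  have hb_nonneg : 0 ≤ b := integral_nonneg fun x ↦ Real.sqrt_nonneg _
  -- b ≤ sqrt (a * (2 - a))
  set c : ℝ := Real.sqrt (a * (2 - a)) with hc_def
  have hc_pos : 0 < c := Real.sqrt_pos.mpr (by nlinarith)
  have hb_le : b ≤ c := by
    have key : 2 * c * b ≤ (2 - a) * a + a * (2 - a) := by
      have hpt : ∀ x, 2 * c * Real.sqrt (g x) ≤ (2 - a) * min (g x) 1 + a * max (g x) 1 := by
        intro x
        have h := bh_amgm (min (g x) 1) (max (g x) 1) a (2 - a)
          (le_min (hg_nonneg x) one_pos.le) (le_max_of_le_right one_pos.le)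
          ha_nonneg (by linarith)
        have hmm : min (g x) 1 * max (g x) 1 = g x := by
          rcases le_total (g x) 1 with hle | hle
          · rw [min_eq_left hle, max_eq_right hle, mul_one]
          · rw [min_eq_right hle, max_eq_left hle, one_mul]
        rw [hmm] at h
        exact h
      calc 2 * c * b = ∫ x, 2 * c * Real.sqrt (g x) ∂ν := by
            rw [integral_const_mul]
      _ ≤ ∫ x, ((2 - a) * min (g x) 1 + a * max (g x) 1) ∂ν := by
            refine integral_mono (hsqrt_int.const_mul _)
              ((hmin_int.const_mul _).add (hmax_int.const_mul _)) hpt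
      _ = (2 - a) * a + a * (2 - a) := by
            rw [integral_add (hmin_int.const_mul _) (hmax_int.const_mul _),
              integral_const_mul, integral_const_mul, hmax_eq]
    have hc2 : c * c = a * (2 - a) := Real.mul_self_sqrt (by nlinarith)
    nlinarith
  -- Jensen: exp(-K/2) ≤ b
  set K : ℝ := ∫ x, llr μ ν x ∂μ with hK_def
  have hsm : (fun x ↦ g x • Real.exp (-llr μ ν x / 2)) = fun x ↦ Real.sqrt (g x) := by
    funext x
    rcases eq_or_lt_of_le (hg_nonneg x) with h0 | hpos
    · simp [← h0]
    · have hllr : llr μ ν x = Real.log (g x) := rfl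
      have hsq : Real.exp (-llr μ ν x / 2) = (Real.sqrt (g x))⁻¹ := by
        rw [hllr]
        have : Real.sqrt (g x) = Real.exp (Real.log (g x) / 2) := by
          rw [Real.sqrt_eq_rpow, Real.rpow_def_of_pos hpos]
          ring_nf
        rw [this, ← Real.exp_neg]
        ring_nf
      rw [smul_eq_mul, hsq]
      have hs_pos : 0 < Real.sqrt (g x) := Real.sqrt_pos.mpr hpos
      field_simp
      exact (Real.sq_sqrt hpos.le).symm
  have hexp_int : Integrable (fun x ↦ Real.exp (-llr μ ν x / 2)) μ := by
    rw [← integrable_rnDeriv_smul_iff hμν]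
    rw [show (fun x ↦ (μ.rnDeriv ν x).toReal • Real.exp (-llr μ ν x / 2))
      = fun x ↦ g x • Real.exp (-llr μ ν x / 2) from rfl, hsm]
    exact hsqrt_int
  have hexp_eq : ∫ x, Real.exp (-llr μ ν x / 2) ∂μ = b := by
    rw [← integral_rnDeriv_smul hμν (f := fun x ↦ Real.exp (-llr μ ν x / 2))]
    rw [show (fun x ↦ (μ.rnDeriv ν x).toReal • Real.exp (-llr μ ν x / 2))
      = fun x ↦ g x • Real.exp (-llr μ ν x / 2) from rfl, hsm, hb_def]
  have hjensen : Real.exp (-K / 2) ≤ b := by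
    have h := convexOn_exp.map_integral_le (μ := μ) (f := fun x ↦ -llr μ ν x / 2)
      continuous_exp.continuousOn isClosed_univ
      (Filter.Eventually.of_forall fun x ↦ Set.mem_univ _)
      ((hint.neg).div_const 2) ?_
    · have hintval : ∫ x, -llr μ ν x / 2 ∂μ = -K / 2 := by
        rw [integral_div, integral_neg, hK_def]
      rw [hintval] at h
      calc Real.exp (-K / 2) ≤ ∫ x, Real.exp (-llr μ ν x / 2) ∂μ := h
      _ = b := hexp_eq
    · exact hexp_int
  -- conclude
  have hexpK : Real.exp (-K) ≤ a * (2 - a) := by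
    have : Real.exp (-K) = Real.exp (-K / 2) * Real.exp (-K / 2) := by
      rw [← Real.exp_add]; ring_nf
    rw [this]
    calc Real.exp (-K / 2) * Real.exp (-K / 2) ≤ b * b := by
          have := Real.exp_pos (-K / 2)
          nlinarith
    _ ≤ c * c := by nlinarith
    _ = a * (2 - a) := Real.mul_self_sqrt (by nlinarith)
  calc |(μ s).toReal - (ν s).toReal| ≤ 1 - a := habs
  _ = Real.sqrt ((1 - a) ^ 2) := (Real.sqrt_sq (by linarith)).symm
  _ ≤ Real.sqrt (1 - Real.exp (-K)) := by
        apply Real.sqrt_le_sqrt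
        nlinarith
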